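/- (Main theorem, full equivalence) The following are equivalent: (i) for every h1 ∈ H1 and every ε > 0 there exists h2 ∈ H2 with A1 h1 = B1 h2 and ‖A2 h1 − B2 h2‖ ≤ ε; (ii) there exists C > 0 with ‖A1* h4‖ ≤ C ‖B1* h4‖ for all h4 ∈ H4, and for every h5 ∈ H5 and every sequence (y_n) in H4 with B1* y_n → B2* h5 in H2 one has A1* y_n → A2* h5 in H1; (iii) denoting by Π : H2 → H2 the orthogonal projection onto ker(B1), there exist a continuous linear map D1 : H2 → H1 and a linear map D2 : H2 → H1 (not necessarily continuous) with A1* = D1 ∘ B1* and A2* = (D1 + D2 ∘ Π) ∘ B2*. -/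

import Mathlib

open ContinuousLinearMap Filter
open scoped RealInnerProductSpace

set_option linter.unusedVariables false

/-- Factor a linear map through another when kernels are nested (over a field). -/
lemma aux_factor_through {V W U : Type*} [AddCommGroup V] [Module ℝ V]
    [AddCommGroup W] [Module ℝ W] [AddCommGroup U] [Module ℝ U]
    (f : V →ₗ[ℝ] W) (g : V →ₗ[ℝ] U) (h : LinearMap.ker f ≤ LinearMap.ker g) :
    ∃ D : W →ₗ[ℝ] U, ∀ v, g v = D (f v) := by
  set gbar : (V ⧸ LinearMap.ker f) →ₗ[ℝ] U := Submodule.liftQ _ g h with hgbar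
  set eqv := f.quotKerEquivRange
  set ι : (V ⧸ LinearMap.ker f) →ₗ[ℝ] W :=
    (LinearMap.range f).subtype.comp (eqv : (V ⧸ LinearMap.ker f) →ₗ[ℝ] LinearMap.range f)
  have hι_inj : LinearMap.ker ι = ⊥ := by
    rw [LinearMap.ker_eq_bot]
    exact (LinearMap.range f).injective_subtype.comp eqv.injective
  obtain ⟨ℓ, hℓ⟩ := ι.exists_leftInverse_of_injective hι_inj
  refine ⟨gbar.comp ℓ, fun v => ?_⟩
  have h1 : ι (Submodule.Quotient.mk v) = f v := by
    simp only [ι, LinearMap.comp_apply, Submodule.subtype_apply, LinearEquiv.coe_coe]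
    exact f.quotKerEquivRange_apply_mk v
  have h2 : ℓ (f v) = Submodule.Quotient.mk v := by
    rw [← h1]
    exact congrArg (fun m => m (Submodule.Quotient.mk v)) hℓ
  simp only [LinearMap.comp_apply, h2]
  exact (Submodule.liftQ_apply _ g v).symm

/-- Douglas: exact range inclusion gives a continuous factorization. -/
lemma aux_douglas_range {H1 H2 H4 : Type*}
    [NormedAddCommGroup H1] [InnerProductSpace ℝ H1] [CompleteSpace H1]
    [NormedAddCommGroup H2] [InnerProductSpace ℝ H2] [CompleteSpace H2]
    [NormedAddCommGroup H4] [InnerProductSpace ℝ H4] [CompleteSpace H4]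
    (A1 : H1 →L[ℝ] H4) (B1 : H2 →L[ℝ] H4)
    (h : ∀ h1 : H1, ∃ h2 : H2, A1 h1 = B1 h2) :
    ∃ D : H1 →L[ℝ] H2, ∀ h1, A1 h1 = B1 (D h1) := by
  have hex : ∀ h1 : H1, ∃ h2 : H2, B1 h2 = A1 h1 ∧ h2 ∈ (LinearMap.ker (B1 : H2 →ₗ[ℝ] H4))ᗮ := by
    intro h1
    obtain ⟨h2, hh2⟩ := h h1
    refine ⟨h2 - (Submodule.orthogonalProjectionOnto (LinearMap.ker (B1 : H2 →ₗ[ℝ] H4)) h2 : H2), ?_, ?_⟩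
    · have hker : B1 ((Submodule.orthogonalProjectionOnto (LinearMap.ker (B1 : H2 →ₗ[ℝ] H4)) h2 : H2)) = 0 :=
        (Submodule.orthogonalProjectionOnto (LinearMap.ker (B1 : H2 →ₗ[ℝ] H4)) h2).2
      rw [map_sub, hker, sub_zero, hh2]
    · exact (LinearMap.ker (B1 : H2 →ₗ[ℝ] H4)).sub_starProjection_mem_orthogonal h2
  have huniq : ∀ (v : H4) (a b : H2), B1 a = v → a ∈ (LinearMap.ker (B1 : H2 →ₗ[ℝ] H4))ᗮ →
      B1 b = v → b ∈ (LinearMap.ker (B1 : H2 →ₗ[ℝ] H4))ᗮ → a = b := by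
    intro v a b ha ha' hb hb'
    have hmem : a - b ∈ LinearMap.ker (B1 : H2 →ₗ[ℝ] H4) := by
      rw [LinearMap.mem_ker, map_sub, ContinuousLinearMap.coe_coe, ha, hb, sub_self]
    have hmem' : a - b ∈ (LinearMap.ker (B1 : H2 →ₗ[ℝ] H4))ᗮ := Submodule.sub_mem _ ha' hb'
    have : ⟪a - b, a - b⟫ = 0 := (Submodule.mem_orthogonal _ _).mp hmem' _ hmem
    rw [← sub_eq_zero]
    exact inner_self_eq_zero.mp this
  choose f hf1 hf2 using hex
  have hadd : ∀ x y, f (x + y) = f x + f y := by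
    intro x y
    refine huniq (A1 (x + y)) _ _ (hf1 _) (hf2 _) ?_ (Submodule.add_mem _ (hf2 x) (hf2 y))
    rw [map_add, hf1, hf1, map_add]
  have hsmul : ∀ (c : ℝ) x, f (c • x) = c • f x := by
    intro c x
    refine huniq (A1 (c • x)) _ _ (hf1 _) (hf2 _) ?_ (Submodule.smul_mem _ c (hf2 x))
    rw [map_smul, hf1, map_smul]
  set flin : H1 →ₗ[ℝ] H2 :=
    { toFun := f, map_add' := hadd, map_smul' := hsmul } with hflin
  have hcont : Continuous flin := by
    apply flin.continuous_of_seq_closed_graph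
    intro u x y hu hfu
    have h1 : Tendsto (fun n => B1 (f (u n))) atTop (nhds (B1 y)) :=
      (B1.continuous.tendsto _).comp hfu
    have h2 : Tendsto (fun n => B1 (f (u n))) atTop (nhds (A1 x)) := by
      have : (fun n => B1 (f (u n))) = fun n => A1 (u n) := funext fun n => hf1 (u n)
      rw [this]
      exact (A1.continuous.tendsto _).comp hu
    have hBy : B1 y = A1 x := tendsto_nhds_unique h1 h2
    have hymem : y ∈ (LinearMap.ker (B1 : H2 →ₗ[ℝ] H4))ᗮ := by
      have hcl : IsClosed ((LinearMap.ker (B1 : H2 →ₗ[ℝ] H4))ᗮ : Set H2) := Submodule.isClosed_orthogonal _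
      exact hcl.mem_of_tendsto hfu (Eventually.of_forall fun n => hf2 (u n))
    exact huniq (A1 x) y (f x) hBy hymem (hf1 x) (hf2 x)
  exact ⟨⟨flin, hcont⟩, fun h1 => (hf1 h1).symm⟩

/-- Douglas: majorization gives a continuous factorization (through the second map). -/
lemma aux_douglas_maj {H1 H2 H4 : Type*}
    [NormedAddCommGroup H1] [InnerProductSpace ℝ H1] [CompleteSpace H1]
    [NormedAddCommGroup H2] [InnerProductSpace ℝ H2] [CompleteSpace H2]
    [NormedAddCommGroup H4] [InnerProductSpace ℝ H4] [CompleteSpace H4]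
    (S : H4 →L[ℝ] H1) (T : H4 →L[ℝ] H2) (C : ℝ)
    (h : ∀ y, ‖S y‖ ≤ C * ‖T y‖) :
    ∃ D : H2 →L[ℝ] H1, ∀ y, S y = D (T y) := by
  set Tl : H4 →ₗ[ℝ] H2 := (T : H4 →ₗ[ℝ] H2) with hTl
  set R : Submodule ℝ H2 := LinearMap.range Tl with hR
  have hker : LinearMap.ker Tl ≤ LinearMap.ker (S : H4 →ₗ[ℝ] H1) := by
    intro y hy
    have hy' : T y = 0 := hy
    have := h y
    rw [hy', norm_zero, mul_zero] at this
    exact norm_le_zero_iff.mp this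
  set gbar : (H4 ⧸ LinearMap.ker Tl) →ₗ[ℝ] H1 :=
    Submodule.liftQ _ (S : H4 →ₗ[ℝ] H1) hker with hgbar
  set eqv := Tl.quotKerEquivRange with heqv
  set φ : R →ₗ[ℝ] H1 := gbar.comp (eqv.symm : R →ₗ[ℝ] (H4 ⧸ LinearMap.ker Tl)) with hφ
  have hφ_apply : ∀ (y : H4) (hy : T y ∈ R), φ ⟨T y, hy⟩ = S y := by
    intro y hy
    have h1 : eqv (Submodule.Quotient.mk y) = ⟨T y, hy⟩ :=
      Subtype.ext (Tl.quotKerEquivRange_apply_mk y)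
    have h2 : eqv.symm ⟨T y, hy⟩ = Submodule.Quotient.mk y := by
      rw [← h1, LinearEquiv.symm_apply_apply]
    simp only [φ, LinearMap.comp_apply, LinearEquiv.coe_coe, h2]
    exact Submodule.liftQ_apply _ _ y
  have hφ_bound : ∀ x : R, ‖φ x‖ ≤ C * ‖x‖ := by
    rintro ⟨v, hv⟩
    obtain ⟨y, rfl⟩ := hv
    have : (⟨Tl y, ⟨y, rfl⟩⟩ : R) = ⟨T y, ⟨y, rfl⟩⟩ := rfl
    rw [this, hφ_apply y ⟨y, rfl⟩]
    exact h y
  set φc : R →L[ℝ] H1 := φ.mkContinuous C hφ_bound with hφc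
  set K : Submodule ℝ H2 := R.topologicalClosure with hK
  have hRK : R ≤ K := Submodule.le_topologicalClosure R
  haveI : CompleteSpace K := R.isClosed_topologicalClosure.completeSpace_coe
  set el : R →ₗ[ℝ] K := Submodule.inclusion hRK with hel
  have hel_norm : ∀ x : R, ‖el x‖ = ‖x‖ := fun x => rfl
  set e : R →L[ℝ] K := el.mkContinuous 1 (fun x => by rw [hel_norm, one_mul]) with he
  have h_unif : IsUniformInducing e := by
    have : Isometry e := AddMonoidHomClass.isometry_of_norm e (fun x => rfl)
    exact this.isUniformInducing
  have h_dense : DenseRange e := by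
    rw [Metric.denseRange_iff]
    intro z r hr
    have hz : (z : H2) ∈ closure (R : Set H2) := z.2
    obtain ⟨b, hbR, hbd⟩ := Metric.mem_closure_iff.mp hz r hr
    refine ⟨⟨b, hbR⟩, ?_⟩
    have : dist z (e ⟨b, hbR⟩) = dist (z : H2) b := rfl
    rw [this]
    exact hbd
  set Dext : K →L[ℝ] H1 := φc.extend e with hDext
  refine ⟨Dext.comp (Submodule.orthogonalProjectionOnto K), fun y => ?_⟩
  have hmemR : T y ∈ R := ⟨y, rfl⟩
  have hmemK : T y ∈ K := hRK hmemR
  have hproj : Submodule.orthogonalProjectionOnto K (T y) = ⟨T y, hmemK⟩ :=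
    Subtype.ext (by rw [← Submodule.starProjection_apply]; exact Submodule.starProjection_eq_self_iff.mpr hmemK)
  have hee : e ⟨T y, hmemR⟩ = ⟨T y, hmemK⟩ := rfl
  rw [ContinuousLinearMap.comp_apply, hproj, ← hee, ContinuousLinearMap.extend_eq (h_dense := h_dense) (h_e := h_unif)]
  have : φc ⟨T y, hmemR⟩ = φ ⟨T y, hmemR⟩ := rfl
  rw [this, hφ_apply y hmemR]

/-- Construct the (possibly discontinuous) corrector `D2`. -/
lemma aux_D2 {H1 H2 H5 : Type*}
    [NormedAddCommGroup H1] [InnerProductSpace ℝ H1] [CompleteSpace H1]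
    [NormedAddCommGroup H2] [InnerProductSpace ℝ H2] [CompleteSpace H2]
    [NormedAddCommGroup H5] [InnerProductSpace ℝ H5] [CompleteSpace H5]
    (A2 : H1 →L[ℝ] H5) (B2 : H2 →L[ℝ] H5) (P : H2 →L[ℝ] H2) (D1 : H2 →L[ℝ] H1)
    (hw : ∀ h5, P (adjoint B2 h5) = 0 → adjoint A2 h5 = D1 (adjoint B2 h5)) :
    ∃ D2 : H2 →ₗ[ℝ] H1,
      ∀ h5, adjoint A2 h5 = D1 (adjoint B2 h5) + D2 (P (adjoint B2 h5)) := by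
  set f : H5 →ₗ[ℝ] H2 := ((P.comp (adjoint B2) : H5 →L[ℝ] H2) : H5 →ₗ[ℝ] H2) with hf
  set g : H5 →ₗ[ℝ] H1 :=
    ((adjoint A2 - D1.comp (adjoint B2) : H5 →L[ℝ] H1) : H5 →ₗ[ℝ] H1) with hg
  have hker : LinearMap.ker f ≤ LinearMap.ker g := by
    intro v hv
    have hv' : P (adjoint B2 v) = 0 := hv
    have h1 := hw v hv'
    show (adjoint A2 - D1.comp (adjoint B2) : H5 →L[ℝ] H1) v = 0
    rw [ContinuousLinearMap.sub_apply, ContinuousLinearMap.comp_apply, sub_eq_zero]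
    exact h1
  obtain ⟨D2, hD2⟩ := aux_factor_through f g hker
  refine ⟨D2, fun h5 => ?_⟩
  have h1 := hD2 h5
  have h2 : adjoint A2 h5 - D1 (adjoint B2 h5) = D2 (P (adjoint B2 h5)) := h1
  rw [sub_eq_iff_eq_add'] at h2
  exact h2

set_option maxHeartbeats 2000000 in
/-- Main theorem: mixed Douglas-type majorization and factorization, full equivalence. -/
theorem mixed_majorization_factorization_tfae
    {H1 H2 H4 H5 : Type*}
    [NormedAddCommGroup H1] [InnerProductSpace ℝ H1] [CompleteSpace H1]
    [NormedAddCommGroup H2] [InnerProductSpace ℝ H2] [CompleteSpace H2]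
    [NormedAddCommGroup H4] [InnerProductSpace ℝ H4] [CompleteSpace H4]
    [NormedAddCommGroup H5] [InnerProductSpace ℝ H5] [CompleteSpace H5]
    (A1 : H1 →L[ℝ] H4) (A2 : H1 →L[ℝ] H5)
    (B1 : H2 →L[ℝ] H4) (B2 : H2 →L[ℝ] H5)
    (P : H2 →L[ℝ] H2)
    (hP : P = (LinearMap.ker (B1 : H2 →ₗ[ℝ] H4)).subtypeL.comp (Submodule.orthogonalProjectionOnto (LinearMap.ker (B1 : H2 →ₗ[ℝ] H4)))) :
    [ -- (i) mixed range inclusion and closure of range inclusion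
      ∀ h1 : H1, ∀ ε : ℝ, 0 < ε →
        ∃ h2 : H2, A1 h1 = B1 h2 ∧ ‖A2 h1 - B2 h2‖ ≤ ε,
      -- (ii) mixed quantitative and non-quantitative majorization
      (∃ C : ℝ, 0 < C ∧ ∀ h4 : H4, ‖adjoint A1 h4‖ ≤ C * ‖adjoint B1 h4‖) ∧
      (∀ (h5 : H5) (y : ℕ → H4),
        Tendsto (fun n => adjoint B1 (y n)) atTop (nhds (adjoint B2 h5)) →
        Tendsto (fun n => adjoint A1 (y n)) atTop (nhds (adjoint A2 h5))),
      -- (iii) mixed continuous and non-continuous factorization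
      ∃ (D1 : H2 →L[ℝ] H1) (D2 : H2 →ₗ[ℝ] H1),
        (∀ h4 : H4, adjoint A1 h4 = D1 (adjoint B1 h4)) ∧
        (∀ h5 : H5, adjoint A2 h5 = D1 (adjoint B2 h5) + D2 (P (adjoint B2 h5)))
    ].TFAE := by
  -- basic facts
  have hker_orth : (LinearMap.range (adjoint B1 : H4 →ₗ[ℝ] H2))ᗮ = LinearMap.ker (B1 : H2 →ₗ[ℝ] H4) := by
    ext x
    constructor
    · intro hx
      have h0 := (Submodule.mem_orthogonal _ x).mp hx (adjoint B1 (B1 x)) ⟨B1 x, rfl⟩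
      rw [adjoint_inner_left] at h0
      exact LinearMap.mem_ker.mpr (inner_self_eq_zero.mp h0)
    · intro hx
      rw [Submodule.mem_orthogonal]
      rintro u ⟨y, rfl⟩
      rw [ContinuousLinearMap.coe_coe, adjoint_inner_left, (show B1 x = 0 from LinearMap.mem_ker.mp hx), inner_zero_right]
  have hclos : (LinearMap.range (adjoint B1 : H4 →ₗ[ℝ] H2)).topologicalClosure = (LinearMap.ker (B1 : H2 →ₗ[ℝ] H4))ᗮ := by
    rw [← hker_orth, Submodule.orthogonal_orthogonal_eq_closure]
  have hPzero : ∀ x : H2, P x = 0 ↔ x ∈ (LinearMap.ker (B1 : H2 →ₗ[ℝ] H4))ᗮ := by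
    intro x
    constructor
    · intro h
      have h' : (Submodule.orthogonalProjectionOnto (LinearMap.ker (B1 : H2 →ₗ[ℝ] H4)) x : H2) = 0 := by
        rw [hP] at h
        simpa using h
      have h2 := Submodule.sub_starProjection_mem_orthogonal (K := LinearMap.ker (B1 : H2 →ₗ[ℝ] H4)) x
      rw [Submodule.starProjection_apply] at h2
      rwa [h', sub_zero] at h2
    · intro h
      rw [hP]
      simp [Submodule.orthogonalProjectionOnto_apply_of_mem_orthogonal h]
  tfae_have 1 → 3 := by
    intro hi
    obtain ⟨D, hD⟩ := aux_douglas_range A1 B1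
      (fun h1 => (hi h1 1 one_pos).imp fun h2 hh => hh.1)
    set D1 : H2 →L[ℝ] H1 := adjoint D with hD1def
    have hD1 : ∀ h4 : H4, adjoint A1 h4 = D1 (adjoint B1 h4) := by
      have hA1 : A1 = B1.comp D := ContinuousLinearMap.ext fun x => hD x
      intro h4
      rw [hA1, adjoint_comp]
      rfl
    have hw : ∀ h5, P (adjoint B2 h5) = 0 → adjoint A2 h5 = D1 (adjoint B2 h5) := by
      intro h5 hp
      have horth := (hPzero _).mp hp
      apply ext_inner_right ℝ
      intro x
      rw [adjoint_inner_left]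
      have hrhs : ⟪D1 (adjoint B2 h5), x⟫ = ⟪h5, B2 (D x)⟫ := by
        rw [hD1def, adjoint_inner_left, adjoint_inner_left]
      rw [hrhs]
      have key : ∀ ε : ℝ, 0 < ε → |⟪h5, A2 x⟫ - ⟪h5, B2 (D x)⟫| ≤ ‖h5‖ * ε := by
        intro ε hε
        obtain ⟨h2, hB, hn⟩ := hi x ε hε
        have hk : h2 - D x ∈ LinearMap.ker (B1 : H2 →ₗ[ℝ] H4) := by
          rw [LinearMap.mem_ker, map_sub, ContinuousLinearMap.coe_coe, ← hB, hD x, sub_self]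
        have hz : ⟪h5, B2 h2⟫ = ⟪h5, B2 (D x)⟫ := by
          have h0 : ⟪h2 - D x, adjoint B2 h5⟫ = 0 :=
            (Submodule.mem_orthogonal _ _).mp horth _ hk
          rw [real_inner_comm, adjoint_inner_left, map_sub, inner_sub_right] at h0
          linarith
        rw [← hz, show ⟪h5, A2 x⟫ - ⟪h5, B2 h2⟫ = ⟪h5, A2 x - B2 h2⟫ from
          (inner_sub_right _ _ _).symm]
        calc |⟪h5, A2 x - B2 h2⟫| ≤ ‖h5‖ * ‖A2 x - B2 h2‖ := abs_real_inner_le_norm _ _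
          _ ≤ ‖h5‖ * ε := mul_le_mul_of_nonneg_left hn (norm_nonneg _)
      have habs : |⟪h5, A2 x⟫ - ⟪h5, B2 (D x)⟫| ≤ 0 := by
        refine le_of_forall_pos_le_add ?_
        intro ε hε
        have hpos : (0:ℝ) < ‖h5‖ + 1 := by positivity
        have h1 := key (ε / (‖h5‖ + 1)) (by positivity)
        have h2 : ‖h5‖ * (ε / (‖h5‖ + 1)) ≤ ε := by
          calc ‖h5‖ * (ε / (‖h5‖ + 1)) ≤ (‖h5‖ + 1) * (ε / (‖h5‖ + 1)) := by
                have hnn : (0:ℝ) ≤ ε / (‖h5‖ + 1) := by positivity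
                nlinarith
            _ = ε := by rw [mul_comm, div_mul_cancel₀ _ (ne_of_gt hpos)]
        linarith
      have : ⟪h5, A2 x⟫ - ⟪h5, B2 (D x)⟫ = 0 := abs_nonpos_iff.mp habs
      linarith
    obtain ⟨D2, hD2⟩ := aux_D2 A2 B2 P D1 hw
    exact ⟨D1, D2, hD1, hD2⟩
  tfae_have 3 → 2 := by
    rintro ⟨D1, D2, hD1, hD2⟩
    constructor
    · refine ⟨‖D1‖ + 1, by positivity, fun y => ?_⟩
      rw [hD1]
      calc ‖D1 (adjoint B1 y)‖ ≤ ‖D1‖ * ‖adjoint B1 y‖ := D1.le_opNorm _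
        _ ≤ (‖D1‖ + 1) * ‖adjoint B1 y‖ := by
            have := norm_nonneg (adjoint B1 y); nlinarith
    · intro h5 y hy
      have hmem : adjoint B2 h5 ∈ (LinearMap.range (adjoint B1 : H4 →ₗ[ℝ] H2)).topologicalClosure := by
        have h' : adjoint B2 h5 ∈ closure ((LinearMap.range (adjoint B1 : H4 →ₗ[ℝ] H2) : Submodule ℝ H2) : Set H2) :=
          mem_closure_of_tendsto hy (Eventually.of_forall fun n => ⟨y n, rfl⟩)
        rwa [← Submodule.topologicalClosure_coe, SetLike.mem_coe] at h'
      have hp : P (adjoint B2 h5) = 0 := (hPzero _).mpr (hclos ▸ hmem)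
      have heq : adjoint A2 h5 = D1 (adjoint B2 h5) := by
        rw [hD2 h5, hp, map_zero, add_zero]
      rw [heq]
      have hfun : (fun n => adjoint A1 (y n)) = fun n => D1 (adjoint B1 (y n)) :=
        funext fun n => hD1 _
      rw [hfun]
      exact (D1.continuous.tendsto _).comp hy
  tfae_have 2 → 3 := by
    rintro ⟨⟨C, hC, hmaj⟩, hseq⟩
    obtain ⟨D1, hD1⟩ := aux_douglas_maj (adjoint A1) (adjoint B1) C hmaj
    have hw : ∀ h5, P (adjoint B2 h5) = 0 → adjoint A2 h5 = D1 (adjoint B2 h5) := by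
      intro h5 hp
      have horth := (hPzero _).mp hp
      rw [← hclos] at horth
      have hmem : adjoint B2 h5 ∈
          closure ((LinearMap.range (adjoint B1 : H4 →ₗ[ℝ] H2) : Submodule ℝ H2) : Set H2) := by
        rwa [← Submodule.topologicalClosure_coe, SetLike.mem_coe]
      obtain ⟨u, hu_mem, hu_lim⟩ := mem_closure_iff_seq_limit.mp hmem
      have hsel : ∀ n, ∃ z, adjoint B1 z = u n := fun n => hu_mem n
      choose y hy using hsel
      have hy' : Tendsto (fun n => adjoint B1 (y n)) atTop (nhds (adjoint B2 h5)) := by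
        have : (fun n => adjoint B1 (y n)) = u := funext hy
        rw [this]; exact hu_lim
      have h1lim := hseq h5 y hy'
      have h2lim : Tendsto (fun n => adjoint A1 (y n)) atTop (nhds (D1 (adjoint B2 h5))) := by
        have : (fun n => adjoint A1 (y n)) = fun n => D1 (adjoint B1 (y n)) :=
          funext fun n => hD1 _
        rw [this]
        exact (D1.continuous.tendsto _).comp hy'
      exact tendsto_nhds_unique h1lim h2lim
    obtain ⟨D2, hD2⟩ := aux_D2 A2 B2 P D1 hw
    exact ⟨D1, D2, hD1, hD2⟩
  tfae_have 3 → 1 := by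
    rintro ⟨D1, D2, hD1, hD2⟩ h1 ε hε
    have hadj : adjoint A1 = D1.comp (adjoint B1) :=
      ContinuousLinearMap.ext fun y => hD1 y
    have hA1 : A1 = B1.comp (adjoint D1) := by
      calc A1 = adjoint (adjoint A1) := (adjoint_adjoint A1).symm
        _ = adjoint (D1.comp (adjoint B1)) := by rw [hadj]
        _ = (adjoint (adjoint B1)).comp (adjoint D1) := adjoint_comp _ _
        _ = B1.comp (adjoint D1) := by rw [adjoint_adjoint]
    set v : H5 := A2 h1 - B2 (adjoint D1 h1) with hv
    set W : Submodule ℝ H5 := Submodule.map (B2 : H2 →ₗ[ℝ] H5) (LinearMap.ker (B1 : H2 →ₗ[ℝ] H4)) with hW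
    have hvW : v ∈ Wᗮᗮ := by
      rw [Submodule.mem_orthogonal]
      intro u hu
      have hporth : adjoint B2 u ∈ (LinearMap.ker (B1 : H2 →ₗ[ℝ] H4))ᗮ := by
        rw [Submodule.mem_orthogonal]
        intro k hk
        rw [adjoint_inner_right]
        exact (Submodule.mem_orthogonal _ _).mp hu _ (Submodule.mem_map_of_mem hk)
      have hp0 : P (adjoint B2 u) = 0 := (hPzero _).mpr hporth
      have hu2 := hD2 u
      rw [hp0, map_zero, add_zero] at hu2
      rw [hv, inner_sub_right]
      have e1 : ⟪u, A2 h1⟫ = ⟪adjoint A2 u, h1⟫ := (adjoint_inner_left A2 h1 u).symm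
      have e2 : ⟪u, B2 (adjoint D1 h1)⟫ = ⟪D1 (adjoint B2 u), h1⟫ := by
        rw [← adjoint_inner_left B2, adjoint_inner_right]
      rw [e1, e2, hu2, sub_self]
    have hvcl : v ∈ closure (W : Set H5) := by
      rw [Submodule.orthogonal_orthogonal_eq_closure] at hvW
      rwa [← Submodule.topologicalClosure_coe, SetLike.mem_coe]
    obtain ⟨w, hwW, hwd⟩ := Metric.mem_closure_iff.mp hvcl ε hε
    obtain ⟨k, hk, rfl⟩ := hwW
    refine ⟨adjoint D1 h1 + k, ?_, ?_⟩
    · rw [map_add, (show B1 k = 0 from LinearMap.mem_ker.mp hk), add_zero, hA1]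
      rfl
    · have heq : A2 h1 - B2 (adjoint D1 h1 + k) = v - B2 k := by
        rw [hv, map_add]; abel
      rw [heq, ← dist_eq_norm]
      exact hwd.le
  tfae_finish
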